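/- arXiv:2207.05028 — 2 statements merged into one kernel-verified Lean document; each statement's English description precedes it below -/
import Mathlib

section
/- For a symmetric n×n matrix M over a commutative ring and distinct indices i, j, the Dodgson identity reads det(M)·det(M^{ij,ij}) = det(M^{i,i})·det(M^{j,j}) − det(M^{i,j})², where the off-diagonal cofactor minors are equal: det(M^{i,j}) = det(M^{j,i}). -/
section DodgsonAux


open Matrix

variable {α : Type*} [CommRing α]

lemma det_E {m : Type*} [DecidableEq m] [Fintype m] {i j : m} (hij : i ≠ j) (l k : m) :
    (((1 : Matrix m m α).updateCol i (Pi.single l 1)).updateCol j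
        (Pi.single k 1)).det =
      (if l = i then (1:α) else 0) * (if k = j then 1 else 0) -
        (if l = j then (1:α) else 0) * (if k = i then 1 else 0) := by
  by_cases hkl : k = l
  · subst hkl
    rw [det_zero_of_column_eq hij (fun r => by simp [updateCol_apply, hij])]
    rcases eq_or_ne k i with rfl | h1
    · simp [hij.symm, hij]
    · rcases eq_or_ne k j with rfl | h2
      · simp [h1]
      · simp [h1, h2]
  · by_cases hl : l = i
    · subst hl
      by_cases hk : k = j
      · subst hk
        rw [show Pi.single l (1:α) = fun r => (1 : Matrix m m α) r l from
            funext fun r => by simp [Pi.single_apply, one_apply], updateCol_eq_self,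
          show Pi.single k (1:α) = fun r => (1 : Matrix m m α) r k from
            funext fun r => by simp [Pi.single_apply, one_apply], updateCol_eq_self, det_one]
        simp [hij, Ne.symm hkl]
      · -- l = i, k ∉ {i, j}: columns j and k coincide
        rw [det_zero_of_column_eq (Ne.symm hk) (fun r => by
          simp only [updateCol_apply, if_pos rfl, if_neg hk, if_neg hkl]
          simp [Pi.single_apply, one_apply])]
        simp [hk, hij]
    · by_cases hlj : l = j
      · subst hlj
        by_cases hk : k = i
        · subst hk
          -- swap matrix
          have hswap : ((1 : Matrix m m α).updateCol k (Pi.single l 1)).updateCol l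
              (Pi.single k 1) = (1 : Matrix m m α).submatrix id (Equiv.swap k l) := by
            ext r c
            rcases eq_or_ne c l with rfl | hc1
            · simp only [updateCol_apply, if_pos rfl, submatrix_apply, id,
                Equiv.swap_apply_right]
              simp [Pi.single_apply, one_apply]
            · rcases eq_or_ne c k with rfl | hc2
              · simp only [updateCol_apply, if_neg hc1, if_pos rfl, submatrix_apply, id,
                  Equiv.swap_apply_left]
                simp [Pi.single_apply, one_apply]
              · simp only [updateCol_apply, if_neg hc1, if_neg hc2, submatrix_apply, id]
                rw [Equiv.swap_apply_of_ne_of_ne hc2 hc1]; rfl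
          rw [hswap, det_permute', Equiv.Perm.sign_swap hij, det_one]
          simp [hl, Ne.symm hij]
        · -- l = j, k ∉ {i, j}: columns l (= j) and k coincide
          rw [det_zero_of_column_eq (Ne.symm hkl) (fun r => by
            simp only [updateCol_apply, if_pos rfl, if_neg hkl, if_neg hk]
            simp [Pi.single_apply, one_apply])]
          simp [hl, hk, hkl]
      · -- l ∉ {i, j}: columns i and l coincide
        rw [det_zero_of_column_eq (Ne.symm hl) (fun r => by
          simp only [updateCol_apply, if_neg hij, if_pos rfl, if_neg hlj,
            if_neg hl]
          simp [Pi.single_apply, one_apply])]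
        simp [hl, hlj]

lemma uC_comm {m : Type*} [DecidableEq m] {k : Type*} (A : Matrix k m α) {i j : m} (hij : i ≠ j)
    (u v : k → α) :
    (A.updateCol i u).updateCol j v = (A.updateCol j v).updateCol i u := by
  ext r c
  by_cases hc : c = j <;> by_cases hc' : c = i <;>
    simp_all [updateCol_apply]

lemma det_one_uC2 {m : Type*} [DecidableEq m] [Fintype m] {i j : m} (hij : i ≠ j)
    (u v : m → α) :
    (((1 : Matrix m m α).updateCol i u).updateCol j v).det =
      u i * v j - u j * v i := by
  have hu : u = ∑ l, Pi.single l (u l) := (Finset.univ_sum_single u).symm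
  have hv : v = ∑ k, Pi.single k (v k) := (Finset.univ_sum_single v).symm
  have key : ∀ (B : Matrix m m α) (c : m) (w : m → α),
      (B.updateCol c w).det = ∑ k, w k * (B.updateCol c (Pi.single k 1)).det := by
    intro B c w
    rw [← cramer_apply]
    conv_lhs => rw [show w = ∑ k, Pi.single k (w k) from (Finset.univ_sum_single w).symm]
    rw [map_sum, Finset.sum_apply]
    refine Finset.sum_congr rfl fun k _ => ?_
    have hsingle : (Pi.single k (w k) : m → α) = w k • (Pi.single k 1 : m → α) := by
      ext r; simp [Pi.single_apply]
    rw [hsingle, _root_.map_smul, Pi.smul_apply, smul_eq_mul, cramer_apply]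
  rw [key]
  have : ∀ k, (((1 : Matrix m m α).updateCol i u).updateCol j
      (Pi.single k 1)).det = ∑ l, u l *
        ((((1 : Matrix m m α).updateCol i (Pi.single l 1)).updateCol j
          (Pi.single k 1)).det) := by
    intro k
    rw [uC_comm _ hij, key]
    refine Finset.sum_congr rfl fun l _ => ?_
    rw [uC_comm _ (Ne.symm hij)]
  simp_rw [this, det_E hij]
  simp only [mul_ite, ite_mul, mul_one, mul_zero, zero_mul, one_mul, mul_sub,
    Finset.mul_sum, Finset.sum_sub_distrib, Finset.sum_ite_eq', Finset.mem_univ, if_pos]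
  rw [Finset.sum_comm]
  simp [Finset.sum_ite_eq', mul_comm]

lemma det_uC_single {n : ℕ} (X : Matrix (Fin (n + 1)) (Fin (n + 1)) α) (i : Fin (n + 1)) :
    (X.updateCol i (Pi.single i 1)).det = (X.submatrix i.succAbove i.succAbove).det := by
  rw [← det_transpose, ← updateRow_transpose, ← adjugate_apply,
    adjugate_fin_succ_eq_det_submatrix, ← transpose_submatrix, det_transpose]
  have : ((-1 : α)) ^ ((i : ℕ) + i) = 1 := Even.neg_one_pow ⟨i, rfl⟩
  rw [this, one_mul]

lemma submatrix_uC {n : ℕ} (A : Matrix (Fin (n + 2)) (Fin (n + 2)) α) {i j : Fin (n + 2)}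
    {j' : Fin (n + 1)} (hj' : i.succAbove j' = j) (w : Fin (n + 2) → α) :
    (A.updateCol j w).submatrix i.succAbove i.succAbove =
      (A.submatrix i.succAbove i.succAbove).updateCol j' (w ∘ i.succAbove) := by
  ext r c
  by_cases hc : c = j'
  · subst hc
    simp [updateCol_apply, hj']
  · have : i.succAbove c ≠ j := by
      rw [← hj']; exact fun h => hc (Fin.succAbove_right_injective h)
    simp [updateCol_apply, hc, this]

lemma det_double_minor {n : ℕ} (M : Matrix (Fin (n + 2)) (Fin (n + 2)) α)
    {i j : Fin (n + 2)} {j' : Fin (n + 1)} (hj' : i.succAbove j' = j) :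
    ((M.updateCol j (Pi.single j 1)).updateCol i (Pi.single i 1)).det =
      (M.submatrix (i.succAbove ∘ j'.succAbove) (i.succAbove ∘ j'.succAbove)).det := by
  rw [det_uC_single, submatrix_uC _ hj']
  have hw : (Pi.single j (1:α)) ∘ i.succAbove = Pi.single j' 1 := by
    ext k
    by_cases hk : k = j'
    · subst hk; simp [hj', Pi.single_apply]
    · have : i.succAbove k ≠ j := by
        rw [← hj']; exact fun h => hk (Fin.succAbove_right_injective h)
      simp [Function.comp, Pi.single_apply, this, hk]
  rw [hw, det_uC_single, submatrix_submatrix]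

lemma dj_aux {n : ℕ} (M : Matrix (Fin (n + 2)) (Fin (n + 2)) α) {i j : Fin (n + 2)}
    (hij : i ≠ j) {j' : Fin (n + 1)} (hj' : i.succAbove j' = j) :
    M.det * (adjugate M i i * adjugate M j j - adjugate M i j * adjugate M j i) =
      M.det ^ 2 *
        (M.submatrix (i.succAbove ∘ j'.succAbove) (i.succAbove ∘ j'.succAbove)).det := by
  set u : Fin (n + 2) → α := fun k => adjugate M k i with hu
  set v : Fin (n + 2) → α := fun k => adjugate M k j with hv
  set N : Matrix (Fin (n + 2)) (Fin (n + 2)) α :=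
    ((1 : Matrix _ _ α).updateCol j v).updateCol i u with hN
  have hMN : M * N = (M.updateCol j (M.det • (Pi.single j 1 : Fin (n + 2) → α))).updateCol i
      (M.det • (Pi.single i 1 : Fin (n + 2) → α)) := by
    ext r c
    rw [mul_apply]
    by_cases hc : c = i
    · subst hc
      have h1 : ∀ k, N k c = adjugate M k c := fun k => by
        simp [hN, updateCol_self, hu]
      simp only [h1]
      have h2 : ∑ k, M r k * adjugate M k c = (M * adjugate M) r c := (mul_apply).symm
      rw [h2, mul_adjugate]
      simp [Pi.single_apply, one_apply]
    · by_cases hc' : c = j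
      · subst hc'
        have h1 : ∀ k, N k c = adjugate M k c := fun k => by
          simp [hN, updateCol_apply, hc, hv]
        simp only [h1]
        have h2 : ∑ k, M r k * adjugate M k c = (M * adjugate M) r c := (mul_apply).symm
        rw [h2, mul_adjugate]
        simp [updateCol_apply, hc, Pi.single_apply, one_apply]
      · have h1 : ∀ k, N k c = (1 : Matrix _ _ α) k c := fun k => by
          simp [hN, updateCol_apply, hc, hc']
        simp only [h1]
        have h2 : ∑ k, M r k * (1 : Matrix _ _ α) k c =
            (M * (1 : Matrix (Fin (n + 2)) (Fin (n + 2)) α)) r c := (mul_apply).symm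
        rw [h2, mul_one]
        simp [updateCol_apply, hc, hc']
  have hdetN : N.det = v j * u i - v i * u j := det_one_uC2 (Ne.symm hij) v u
  have lhs_eq : M.det * N.det = (M * N).det := (det_mul M N).symm
  rw [hMN] at lhs_eq
  have rhs_eq : ((M.updateCol j (M.det • (Pi.single j 1 : Fin (n + 2) → α))).updateCol i
      (M.det • (Pi.single i 1 : Fin (n + 2) → α))).det = M.det ^ 2 *
        (M.submatrix (i.succAbove ∘ j'.succAbove) (i.succAbove ∘ j'.succAbove)).det := by
    rw [det_updateCol_smul, uC_comm _ (Ne.symm hij), det_updateCol_smul,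
      uC_comm _ hij, det_double_minor M hj']
    ring
  rw [hdetN] at lhs_eq
  rw [← rhs_eq, ← lhs_eq, hu, hv]
  ring

lemma dj {n : ℕ} (M : Matrix (Fin (n + 2)) (Fin (n + 2)) α) {i j : Fin (n + 2)}
    (hij : i ≠ j) {j' : Fin (n + 1)} (hj' : i.succAbove j' = j) :
    adjugate M i i * adjugate M j j - adjugate M i j * adjugate M j i =
      M.det *
        (M.submatrix (i.succAbove ∘ j'.succAbove) (i.succAbove ∘ j'.succAbove)).det := by
  let A' := mvPolynomialX (Fin (n + 2)) (Fin (n + 2)) ℤ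
  have key : adjugate A' i i * adjugate A' j j - adjugate A' i j * adjugate A' j i =
      A'.det *
        (A'.submatrix (i.succAbove ∘ j'.succAbove) (i.succAbove ∘ j'.succAbove)).det := by
    apply mul_left_cancel₀ (det_mvPolynomialX_ne_zero (Fin (n + 2)) ℤ)
    rw [dj_aux A' hij hj']
    ring
  have hMA : (MvPolynomial.aeval fun p : Fin (n + 2) × Fin (n + 2) => M p.1 p.2).mapMatrix A'
      = M := mvPolynomialX_mapMatrix_aeval ℤ M
  let f := MvPolynomial.aeval (R := ℤ) (S₁ := α) fun p : Fin (n + 2) × Fin (n + 2) => M p.1 p.2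
  calc adjugate M i i * adjugate M j j - adjugate M i j * adjugate M j i
      = adjugate (f.mapMatrix A') i i * adjugate (f.mapMatrix A') j j -
          adjugate (f.mapMatrix A') i j * adjugate (f.mapMatrix A') j i := by rw [hMA]
    _ = f (adjugate A' i i * adjugate A' j j - adjugate A' i j * adjugate A' j i) := by
        have h := AlgHom.map_adjugate f A'
        simp only [AlgHom.mapMatrix_apply] at h ⊢
        rw [_root_.map_sub, _root_.map_mul, _root_.map_mul, ← h]
        simp [map_apply]
    _ = f (A'.det *
          (A'.submatrix (i.succAbove ∘ j'.succAbove) (i.succAbove ∘ j'.succAbove)).det) := by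
        rw [key]
    _ = M.det *
          (M.submatrix (i.succAbove ∘ j'.succAbove) (i.succAbove ∘ j'.succAbove)).det := by
        rw [_root_.map_mul, ← hMA]
        have hd := AlgHom.map_det f A'
        have hd2 := AlgHom.map_det f
          (A'.submatrix (i.succAbove ∘ j'.succAbove) (i.succAbove ∘ j'.succAbove))
        simp only [AlgHom.mapMatrix_apply] at hd hd2 ⊢
        rw [hd2, ← submatrix_map, hd]

end DodgsonAux

open Matrix

/-- Dodgson identity for a symmetric matrix: the off-diagonal cofactor minors are equal,
and `det M · det M^{ij,ij} = det M^{i,i} · det M^{j,j} − (det M^{i,j})²`. -/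
theorem stmt6 {R : Type*} [CommRing R] {n : ℕ}
    (M : Matrix (Fin (n + 2)) (Fin (n + 2)) R) (hM : M.IsSymm)
    (i j : Fin (n + 2)) (hij : i ≠ j)
    (j' : Fin (n + 1)) (hj' : i.succAbove j' = j) :
    (M.submatrix i.succAbove j.succAbove).det = (M.submatrix j.succAbove i.succAbove).det ∧
    M.det * (M.submatrix (i.succAbove ∘ j'.succAbove) (i.succAbove ∘ j'.succAbove)).det =
      (M.submatrix i.succAbove i.succAbove).det * (M.submatrix j.succAbove j.succAbove).det -
        (M.submatrix i.succAbove j.succAbove).det ^ 2 := by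
  have h1 : (M.submatrix i.succAbove j.succAbove).det =
      (M.submatrix j.succAbove i.succAbove).det := by
    rw [← det_transpose, transpose_submatrix, hM.eq]
  refine ⟨h1, ?_⟩
  have h2 := dj M hij hj'
  rw [adjugate_fin_succ_eq_det_submatrix, adjugate_fin_succ_eq_det_submatrix,
    adjugate_fin_succ_eq_det_submatrix, adjugate_fin_succ_eq_det_submatrix] at h2
  rw [← h2, ← h1]
  have e1 : ((-1 : R)) ^ ((i : ℕ) + i) = 1 := Even.neg_one_pow ⟨i, rfl⟩
  have e2 : ((-1 : R)) ^ ((j : ℕ) + j) = 1 := Even.neg_one_pow ⟨j, rfl⟩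
  have e3 : ((-1 : R)) ^ ((j : ℕ) + i) = (-1 : R) ^ ((i : ℕ) + j) := by rw [Nat.add_comm]
  have e4 : ((-1 : R) ^ ((i : ℕ) + j)) ^ 2 = 1 := by
    rw [← pow_mul]
    exact Even.neg_one_pow ⟨(i : ℕ) + j, by ring⟩
  rw [e1, e2, e3]
  linear_combination (-(((M.submatrix i.succAbove j.succAbove).det) ^ 2)) * e4
end

section
/- Let σ be a permutation of a finite set S. The number of pairs of complementary functions (ε, ε̃) compatible with the collection of unordered pairs {ε(s), ε̃(σ(s))} (i.e. the number of functions ε choosing one element from each two-element set {s₀,s₁}, up to producing the same multiset of pairs) equals 2^c, where c is the number of cycles of σ. -/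
open MulAction Subgroup Equiv

namespace Stmt8

variable {S E : Type*} [Fintype S] [DecidableEq S] [DecidableEq E]

def e2 (p : S → E × E) : S × Bool → E :=
  fun x => if x.2 then (p x.1).1 else (p x.1).2

lemma choose_eq (p : S → E × E) (ε : S → Bool) (s : S) :
    (if ε s then (p s).1 else (p s).2) = e2 p (s, ε s) := rfl

lemma cochoose_eq (p : S → E × E) (ε : S → Bool) (s : S) :
    (if ε s then (p s).2 else (p s).1) = e2 p (s, !ε s) := by
  cases h : ε s <;> simp [e2, h]

def pterm (p : S → E × E) (ε : S → Bool) (τ : Equiv.Perm S) : Multiset (Sym2 E) :=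
  Finset.univ.val.map fun s =>
    Sym2.mk (if ε s then (p s).1 else (p s).2)
             (if ε (τ s) then (p (τ s)).2 else (p (τ s)).1)

def dfun (σ : Equiv.Perm S) (q : MulAction.orbitRel.Quotient (Subgroup.zpowers σ) S → Bool)
    (s : S) : Bool :=
  q (Quotient.mk _ s)

lemma mk_sigma (σ : Equiv.Perm S) (s : S) :
    (Quotient.mk (MulAction.orbitRel (Subgroup.zpowers σ) S) (σ s)) = Quotient.mk _ s :=
  Quotient.sound (MulAction.mem_orbit s (⟨σ, Subgroup.mem_zpowers σ⟩ : Subgroup.zpowers σ))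

lemma dfun_sigma (σ : Equiv.Perm S) (q) (s : S) : dfun σ q (σ s) = dfun σ q s := by
  unfold dfun
  rw [mk_sigma]

lemma dfun_sigma_inv (σ : Equiv.Perm S) (q) (s : S) : dfun σ q (σ⁻¹ s) = dfun σ q s := by
  have h := dfun_sigma σ q (σ⁻¹ s)
  rw [Equiv.Perm.inv_def, Equiv.apply_symm_apply] at h
  exact h.symm

def tau (σ : Equiv.Perm S) (q : MulAction.orbitRel.Quotient (Subgroup.zpowers σ) S → Bool) :
    Equiv.Perm S where
  toFun s := if dfun σ q s then σ s else σ⁻¹ s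
  invFun s := if dfun σ q s then σ⁻¹ s else σ s
  left_inv s := by
    by_cases h : dfun σ q s <;>
      simp [h, dfun_sigma, dfun_sigma_inv, -Equiv.Perm.coe_inv] <;> simp
  right_inv s := by
    by_cases h : dfun σ q s <;>
      simp [h, dfun_sigma, dfun_sigma_inv, -Equiv.Perm.coe_inv] <;> simp

def rho (σ : Equiv.Perm S) (q : MulAction.orbitRel.Quotient (Subgroup.zpowers σ) S → Bool) :
    Equiv.Perm S where
  toFun s := if dfun σ q s then s else σ⁻¹ s
  invFun s := if dfun σ q s then s else σ s
  left_inv s := by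
    by_cases h : dfun σ q s <;>
      simp [h, dfun_sigma, dfun_sigma_inv, -Equiv.Perm.coe_inv] <;> simp
  right_inv s := by
    by_cases h : dfun σ q s <;>
      simp [h, dfun_sigma, dfun_sigma_inv, -Equiv.Perm.coe_inv] <;> simp

def epsF (σ : Equiv.Perm S) (ε₀ : S → Bool)
    (q : MulAction.orbitRel.Quotient (Subgroup.zpowers σ) S → Bool) (s : S) : Bool :=
  if dfun σ q s then ε₀ s else !ε₀ s

lemma tau_apply (σ : Equiv.Perm S) (q) (s : S) :
    tau σ q s = if dfun σ q s then σ s else σ⁻¹ s := rfl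

lemma rho_apply (σ : Equiv.Perm S) (q) (s : S) :
    rho σ q s = if dfun σ q s then s else σ⁻¹ s := rfl

lemma pterm_F (p : S → E × E) (σ : Equiv.Perm S) (ε₀ : S → Bool)
    (q : MulAction.orbitRel.Quotient (Subgroup.zpowers σ) S → Bool) :
    pterm p (epsF σ ε₀ q) (tau σ q) = pterm p ε₀ σ := by
  unfold pterm
  conv_rhs => rw [← Finset.map_univ_equiv (rho σ q), Finset.map_val, Multiset.map_map]
  refine Multiset.map_congr rfl ?_
  intro s _
  by_cases h : dfun σ q s = true
  · have h' : dfun σ q (σ s) = true := by rw [dfun_sigma]; exact h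
    simp only [Function.comp_apply, Equiv.coe_toEmbedding, tau_apply, rho_apply, epsF,
      h, h', if_true]
  · have hb : dfun σ q s = false := by simpa using h
    have h' : dfun σ q (σ⁻¹ s) = false := by rw [dfun_sigma_inv]; exact hb
    have hσ : σ (σ⁻¹ s) = s := Equiv.apply_symm_apply σ s
    simp only [Function.comp_apply, Equiv.coe_toEmbedding, tau_apply, rho_apply, epsF,
      hb, h', if_false, Bool.false_eq_true, hσ]
    rw [show (if (!ε₀ s) = true then (p s).1 else (p s).2)
          = (if ε₀ s = true then (p s).2 else (p s).1) by cases ε₀ s <;> simp,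
        show (if (!ε₀ (σ⁻¹ s)) = true then (p (σ⁻¹ s)).2 else (p (σ⁻¹ s)).1)
          = (if ε₀ (σ⁻¹ s) = true then (p (σ⁻¹ s)).1 else (p (σ⁻¹ s)).2) by
            cases ε₀ (σ⁻¹ s) <;> simp]
    exact Sym2.eq_swap

end Stmt8

/-- Each `s ∈ S` carries a pair of edges `p s = (s₀, s₁)`; a function `ε : S → Bool`
chooses one of them, `ε̃` the other.  Given a permutation `σ` of `S`, the term produced is
the multiset of unordered pairs `{ε(s), ε̃(σ(s))}`.  Provided all the `2|S|` edges are
distinct, the number of choices `(ε, σ')` producing the same term as a given `(ε₀, σ)`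
is `2^c`, where `c` is the number of cycles of `σ`. -/
theorem stmt8 {S E : Type*} [Fintype S] [DecidableEq S] [DecidableEq E]
    (p : S → E × E)
    (hinj : Function.Injective fun x : S × Bool => if x.2 then (p x.1).1 else (p x.1).2)
    (σ : Equiv.Perm S) (ε₀ : S → Bool) :
    (letI choose : (S → Bool) → S → E := fun ε s => if ε s then (p s).1 else (p s).2
     letI cochoose : (S → Bool) → S → E := fun ε s => if ε s then (p s).2 else (p s).1
     letI term : (S → Bool) → Equiv.Perm S → Multiset (Sym2 E) := fun ε τ =>
       Finset.univ.val.map fun s => Sym2.mk (choose ε s) (cochoose ε (τ s))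
     Nat.card {x : (S → Bool) × Equiv.Perm S // term x.1 x.2 = term ε₀ σ}) =
      2 ^ Nat.card (MulAction.orbitRel.Quotient (Subgroup.zpowers σ) S) := by
  classical
  have hinj' : Function.Injective (Stmt8.e2 p) := hinj
  show Nat.card {x : (S → Bool) × Equiv.Perm S //
      Stmt8.pterm p x.1 x.2 = Stmt8.pterm p ε₀ σ} = _
  set Q := MulAction.orbitRel.Quotient (Subgroup.zpowers σ) S with hQ
  let F : (Q → Bool) → {x : (S → Bool) × Equiv.Perm S //
      Stmt8.pterm p x.1 x.2 = Stmt8.pterm p ε₀ σ} :=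
    fun q => ⟨(Stmt8.epsF σ ε₀ q, Stmt8.tau σ q), Stmt8.pterm_F p σ ε₀ q⟩
  have hbij : Function.Bijective F := by
    constructor
    · intro q1 q2 h
      have he : Stmt8.epsF σ ε₀ q1 = Stmt8.epsF σ ε₀ q2 := congrArg (fun x => x.1.1) h
      funext c
      induction c using Quotient.ind with
      | _ s =>
        have hs := congrFun he s
        unfold Stmt8.epsF Stmt8.dfun at hs
        show q1 (Quotient.mk _ s) = q2 (Quotient.mk _ s)
        cases h1 : q1 (Quotient.mk _ s) <;> cases h2 : q2 (Quotient.mk _ s) <;>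
          rw [h1, h2] at hs <;> simp at hs <;> cases h0 : ε₀ s <;> rw [h0] at hs <;>
            simp_all
    · rintro ⟨⟨ε, τ⟩, h⟩
      have key : ∀ s : S, (ε s = ε₀ s ∧ τ s = σ s ∧ ε (σ s) = ε₀ (σ s)) ∨
          (ε s = !ε₀ s ∧ τ s = σ⁻¹ s ∧ ε (σ⁻¹ s) = !ε₀ (σ⁻¹ s)) := by
        intro s
        have hmem : Sym2.mk (if ε s then (p s).1 else (p s).2)
            (if ε (τ s) then (p (τ s)).2 else (p (τ s)).1) ∈ Stmt8.pterm p ε₀ σ := by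
          rw [← h]
          exact Multiset.mem_map_of_mem _ (Finset.mem_univ_val s)
        obtain ⟨t, ht, heq⟩ := Multiset.mem_map.1 hmem
        rw [Stmt8.choose_eq p ε₀, Stmt8.cochoose_eq p ε₀, Stmt8.choose_eq p ε,
          Stmt8.cochoose_eq p ε] at heq
        rcases Sym2.eq_iff.mp heq with ⟨h1, h2⟩ | ⟨h1, h2⟩
        · have e1 := hinj' h1
          have e2h := hinj' h2
          rw [Prod.mk.injEq] at e1 e2h
          obtain ⟨hts, hb1⟩ := e1
          subst hts
          obtain ⟨hts2, hb2⟩ := e2h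
          refine Or.inl ⟨hb1.symm, hts2.symm, ?_⟩
          have h3 := Bool.not_inj hb2
          rw [← hts2] at h3
          exact h3.symm
        · have e1 := hinj' h1
          have e2h := hinj' h2
          rw [Prod.mk.injEq] at e1 e2h
          obtain ⟨hts, hb1⟩ := e1
          obtain ⟨hts2, hb2⟩ := e2h
          subst hts2
          rw [← hts] at hb1
          refine Or.inr ⟨hb2.symm, ?_, ?_⟩
          · rw [← hts, Equiv.Perm.inv_def, Equiv.symm_apply_apply]
          · rw [Equiv.Perm.inv_def, Equiv.symm_apply_apply, hb1, Bool.not_not]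
      set d : S → Bool := fun s => ε s == ε₀ s with hd
      have hd_iff : ∀ s, d s = true ↔ ε s = ε₀ s := by
        intro s; simp [hd]
      have hfwd : ∀ s, d s = true → d (σ s) = true := by
        intro s hs
        rcases key s with ⟨h1, h2, h3⟩ | ⟨h1, h2, h3⟩
        · exact (hd_iff (σ s)).mpr h3
        · exfalso
          have := (hd_iff s).mp hs
          rw [h1] at this
          cases h0 : ε₀ s <;> rw [h0] at this <;> simp at this
      have hiter : ∀ (k : ℕ) (s : S), d s = true → d ((σ ^ k) s) = true := by
        intro k
        induction k with
        | zero => intro s hs; simpa using hs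
        | succ n ih =>
          intro s hs
          have : (σ ^ (n + 1)) s = (σ ^ n) (σ s) := by
            rw [pow_succ, Equiv.Perm.mul_apply]
          rw [this]
          exact ih (σ s) (hfwd s hs)
      have hdσ : ∀ s, d (σ s) = d s := by
        intro s
        cases hs : d s with
        | true => rw [hfwd s hs]
        | false =>
          cases hc : d (σ s) with
          | false => rfl
          | true =>
            exfalso
            have h1 := hiter (orderOf σ - 1) (σ s) hc
            have horder : (σ ^ (orderOf σ - 1)) (σ s) = s := by
              have h2 : σ ^ (orderOf σ - 1) * σ = 1 := by
                rw [← pow_succ, Nat.sub_add_cancel (orderOf_pos σ), pow_orderOf_eq_one]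
              have h3 : (σ ^ (orderOf σ - 1)) (σ s) = (σ ^ (orderOf σ - 1) * σ) s := rfl
              rw [h3, h2]
              rfl
            rw [horder, hs] at h1
            exact Bool.false_ne_true h1
      have hdσinv : ∀ s, d (σ⁻¹ s) = d s := by
        intro s
        have h' := hdσ (σ⁻¹ s)
        rw [Equiv.Perm.inv_def, Equiv.apply_symm_apply] at h'
        exact h'.symm
      have hz : ∀ (n : ℤ) (s : S), d ((σ ^ n) s) = d s := by
        intro n
        induction n using Int.induction_on with
        | zero => intro s; simp
        | succ i ih =>
          intro s
          have : (σ ^ ((i : ℤ) + 1)) s = (σ ^ (i : ℤ)) (σ s) := by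
            rw [zpow_add_one, Equiv.Perm.mul_apply]
          rw [this, ih (σ s), hdσ]
        | pred i ih =>
          intro s
          have : (σ ^ (-(i : ℤ) - 1)) s = (σ ^ (-(i : ℤ))) (σ⁻¹ s) := by
            rw [zpow_sub_one, Equiv.Perm.mul_apply]
          rw [this, ih (σ⁻¹ s), hdσinv]
      have hresp : ∀ a b : S, (MulAction.orbitRel (Subgroup.zpowers σ) S).r a b → d a = d b := by
        intro a b hab
        rw [MulAction.orbitRel_apply] at hab
        obtain ⟨⟨g, hg⟩, rfl⟩ := MulAction.mem_orbit_iff.mp hab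
        obtain ⟨n, rfl⟩ := Subgroup.mem_zpowers_iff.mp hg
        exact hz n b
      refine ⟨fun c => Quotient.liftOn c d hresp, ?_⟩
      apply Subtype.ext
      have hdfun : ∀ s : S, Stmt8.dfun σ (fun c => Quotient.liftOn c d hresp) s = d s :=
        fun s => rfl
      refine Prod.ext ?_ ?_
      · show Stmt8.epsF σ ε₀ _ = ε
        funext s
        unfold Stmt8.epsF
        rw [hdfun]
        rcases hb : d s with _ | _
        · have hne : ¬ (ε s = ε₀ s) := by
            intro hcon
            have h' := (hd_iff s).mpr hcon
            rw [hb] at h'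
            exact Bool.false_ne_true h'
          simp only [Bool.false_eq_true, if_false]
          cases h1 : ε s <;> cases h2 : ε₀ s <;> simp_all
        · simp only [if_true]
          exact ((hd_iff s).mp hb).symm
      · show Stmt8.tau σ _ = τ
        apply Equiv.ext
        intro s
        rw [Stmt8.tau_apply, hdfun]
        rcases hb : d s with _ | _
        · rcases key s with ⟨h1, h2, h3⟩ | ⟨h1, h2, h3⟩
          · exfalso
            have h' := (hd_iff s).mpr h1
            rw [hb] at h'
            exact Bool.false_ne_true h'
          · simp only [Bool.false_eq_true, if_false]
            exact h2.symm
        · rcases key s with ⟨h1, h2, h3⟩ | ⟨h1, h2, h3⟩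
          · simp only [if_true]
            exact h2.symm
          · exfalso
            have := (hd_iff s).mp hb
            rw [h1] at this
            cases h0 : ε₀ s <;> rw [h0] at this <;> simp at this
  haveI : Finite Q := Quotient.finite _
  rw [← Nat.card_eq_of_bijective F hbij, Nat.card_fun, Nat.card_eq_fintype_card (α := Bool)]
  simp
end
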